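/- Let η be a bipartite state on ℂ^m ⊗ ℂ^n with rank r satisfying 1 ≤ r ≤ m + n − 2. Then there exist unitary matrices U ∈ U(m) and V ∈ U(n) such that the state (U ⊗ V) η (U ⊗ V)† has its last diagonal entry equal to zero, i.e. the entry at row and column index (m−1, n−1) vanishes (equivalently, since the matrix is positive semidefinite, its entire last row and last column vanish, so it has the block form M ⊕ 0). -/

import Mathlib

noncomputable section
open scoped Matrix Kronecker ComplexOrder
open MvPolynomial


def wtf (m n : ℕ) : (Fin m ⊕ Fin n) → ℕ × ℕ := Sum.elim (fun _ => (1,0)) (fun _ => (0,1))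

theorem weight_wtf_apply {m n : ℕ} (s : (Fin m ⊕ Fin n) →₀ ℕ) :
    Finsupp.weight (wtf m n) s = (∑ j, s (.inl j), ∑ k, s (.inr k)) := by
  rw [Finsupp.weight_apply, Finsupp.sum_fintype _ _ (by simp)]
  rw [Fintype.sum_sum_type]
  apply Prod.ext <;>
    simp [wtf, Prod.fst_sum, Prod.snd_sum]

/-- all exponents of bidegree (D,D) -/
def expFinset (m n D : ℕ) : Finset ((Fin m ⊕ Fin n) →₀ ℕ) :=
  ((Finset.univ : Finset ((Fin m ⊕ Fin n) → Fin (D+1))).image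
    (fun f => Finsupp.equivFunOnFinite.symm (fun i => ((f i : ℕ))))).filter
    (fun s => Finsupp.weight (wtf m n) s = (D, D))

theorem mem_expFinset {m n D : ℕ} (s : (Fin m ⊕ Fin n) →₀ ℕ) :
    s ∈ expFinset m n D ↔ Finsupp.weight (wtf m n) s = (D, D) := by
  constructor
  · exact fun h => (Finset.mem_filter.1 h).2
  · intro h
    refine Finset.mem_filter.2 ⟨?_, h⟩
    have hbound : ∀ x, s x ≤ D := by
      intro x
      have h1 := congrArg Prod.fst (weight_wtf_apply (m := m) (n := n) s |>.symm.trans h)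
      have h2 := congrArg Prod.snd (weight_wtf_apply (m := m) (n := n) s |>.symm.trans h)
      simp only at h1 h2
      rcases x with x | x
      · calc s (Sum.inl x) ≤ ∑ j, s (Sum.inl j) :=
            Finset.single_le_sum (f := fun j => s (Sum.inl j))
              (fun _ _ => Nat.zero_le _) (Finset.mem_univ x)
          _ = D := h1
      · calc s (Sum.inr x) ≤ ∑ k, s (Sum.inr k) :=
            Finset.single_le_sum (f := fun k => s (Sum.inr k))
              (fun _ _ => Nat.zero_le _) (Finset.mem_univ x)
          _ = D := h2
    refine Finset.mem_image.2 ⟨fun x => ⟨s x, Nat.lt_succ_of_le (hbound x)⟩, Finset.mem_univ _, ?_⟩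
    ext x
    simp

/-- exponent tuples with given sum -/
def antFinset (r k : ℕ) : Finset (Fin r → ℕ) :=
  ((Finset.univ : Finset (Fin r → Fin (k+1))).image
    (fun f i => ((f i : ℕ)))).filter (fun α => ∑ i, α i = k)

theorem mem_antFinset {r k : ℕ} (α : Fin r → ℕ) :
    α ∈ antFinset r k ↔ ∑ i, α i = k := by
  constructor
  · exact fun h => (Finset.mem_filter.1 h).2
  · intro h
    refine Finset.mem_filter.2 ⟨?_, h⟩
    have hbound : ∀ i, α i ≤ k := by
      intro i
      have := Finset.single_le_sum (f := α) (fun _ _ => Nat.zero_le _) (Finset.mem_univ i)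
      omega
    exact Finset.mem_image.2 ⟨fun i => ⟨α i, Nat.lt_succ_of_le (hbound i)⟩, Finset.mem_univ _,
      by ext i; simp⟩

theorem card_antFinset_le {r' k : ℕ} : (antFinset (r' + 1) k).card ≤ (k+1) ^ r' := by
  have : (antFinset (r' + 1) k).card ≤ (Finset.univ : Finset (Fin r' → Fin (k+1))).card := by
    apply Finset.card_le_card_of_injOn
      (fun α (i : Fin r') => (⟨min (α i.castSucc) k, by omega⟩ : Fin (k+1)))
    · intro α _; exact Finset.mem_univ _
    · intro α hα β hβ hfn
      rw [Finset.mem_coe, mem_antFinset] at hα hβ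
      have hab : ∀ i : Fin r', α i.castSucc = β i.castSucc := by
        intro i
        have h1 : min (α i.castSucc) k = min (β i.castSucc) k := by
          have := congrArg Fin.val (congrFun hfn i)
          simpa using this
        have hα' : α i.castSucc ≤ k := by
          have h2 := Finset.single_le_sum (f := α) (fun _ _ => Nat.zero_le _)
            (Finset.mem_univ i.castSucc)
          clear hfn h1; omega
        have hβ' : β i.castSucc ≤ k := by
          have h2 := Finset.single_le_sum (f := β) (fun _ _ => Nat.zero_le _)
            (Finset.mem_univ i.castSucc)
          clear hfn h1; omega
        clear hfn
        omega
      funext x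
      rcases Fin.eq_castSucc_or_eq_last x with ⟨y, rfl⟩ | rfl
      · exact hab y
      · have h1 : ∑ i, α i = ∑ i : Fin r', α i.castSucc + α (Fin.last r') :=
          Fin.sum_univ_castSucc α
        have h2 : ∑ i, β i = ∑ i : Fin r', β i.castSucc + β (Fin.last r') :=
          Fin.sum_univ_castSucc β
        have h3 : ∑ i : Fin r', α i.castSucc = ∑ i : Fin r', β i.castSucc :=
          Finset.sum_congr rfl fun i _ => hab i
        clear hfn
        omega
  simpa using this

theorem wh_component_mul {σ : Type*} {M : Type*} [AddCancelCommMonoid M]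
    {R : Type*} [CommRing R] {w : σ → M} {φ : MvPolynomial σ R} {a : M}
    (hφ : φ.IsWeightedHomogeneous w a) (b : M) (g : MvPolynomial σ R) :
    weightedHomogeneousComponent w (a + b) (φ * g) =
      φ * weightedHomogeneousComponent w b g := by
  classical
  ext d
  rw [coeff_weightedHomogeneousComponent, coeff_mul, coeff_mul]
  by_cases h : Finsupp.weight w d = a + b
  · rw [if_pos h]
    refine Finset.sum_congr rfl ?_
    rintro ⟨x, y⟩ hxy
    rw [Finset.HasAntidiagonal.mem_antidiagonal] at hxy
    rw [coeff_weightedHomogeneousComponent]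
    by_cases hx : coeff x φ = 0
    · simp [hx]
    · have : Finsupp.weight w y = b := by
        have h' := h
        rw [← hxy, map_add, hφ hx] at h'
        exact add_left_cancel h'
      rw [if_pos this]
  · rw [if_neg h]
    symm
    refine Finset.sum_eq_zero ?_
    rintro ⟨x, y⟩ hxy
    rw [Finset.HasAntidiagonal.mem_antidiagonal] at hxy
    rw [coeff_weightedHomogeneousComponent]
    by_cases hx : coeff x φ = 0
    · simp [hx]
    · rw [if_neg, mul_zero]
      intro hy
      exact h (by rw [← hxy, map_add, hφ hx, hy])


theorem claim_step {m n r N : ℕ} (hm : 0 < m) (hn : 0 < n) (hN : 0 < N)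
    (lam : Fin r → MvPolynomial (Fin m ⊕ Fin n) ℂ)
    (hlam : ∀ i, IsWeightedHomogeneous (wtf m n) (lam i) (1, 1))
    (cc : Fin m × Fin n → Fin r → MvPolynomial (Fin m ⊕ Fin n) ℂ)
    (hcc : ∀ q, ∑ i, cc q i * lam i =
      (X (.inl q.1) * X (.inr q.2) : MvPolynomial (Fin m ⊕ Fin n) ℂ) ^ N)
    (d : ℕ) (hd : (m + n) * N ≤ d) :
    weightedHomogeneousSubmodule ℂ (wtf m n) ((d+1 : ℕ), (d+1 : ℕ)) ≤
      ⨆ i, Submodule.map (LinearMap.mulLeft ℂ (lam i))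
        (weightedHomogeneousSubmodule ℂ (wtf m n) ((d : ℕ), (d : ℕ))) := by
  classical
  intro f hf
  have hf' : IsWeightedHomogeneous (wtf m n) f (d+1, d+1) := hf
  nth_rewrite 1 [as_sum f]
  apply Submodule.sum_mem
  intro s hs
  have hsw : Finsupp.weight (wtf m n) s = (d+1, d+1) := hf' (mem_support_iff.1 hs)
  have hsw' := hsw
  rw [weight_wtf_apply, Prod.mk.injEq] at hsw'
  obtain ⟨hsw1, hsw2⟩ := hsw'
  -- pigeonhole
  have hj : ∃ j, N ≤ s (Sum.inl j) := by
    by_contra hc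
    push_neg at hc
    have : ∑ j, s (Sum.inl j) ≤ m * (N - 1) := by
      calc ∑ j, s (Sum.inl j) ≤ ∑ _j : Fin m, (N-1) :=
            Finset.sum_le_sum (fun j _ => by have := hc j; omega)
        _ = m * (N - 1) := by simp [Finset.sum_const, mul_comm]
    have h2 : m * (N - 1) ≤ (m + n) * N := by
      calc m * (N-1) ≤ m * N := Nat.mul_le_mul_left _ (by omega)
        _ ≤ (m + n) * N := Nat.mul_le_mul_right _ (by omega)
    omega
  have hk : ∃ k, N ≤ s (Sum.inr k) := by
    by_contra hc
    push_neg at hc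
    have : ∑ k, s (Sum.inr k) ≤ n * (N - 1) := by
      calc ∑ k, s (Sum.inr k) ≤ ∑ _k : Fin n, (N-1) :=
            Finset.sum_le_sum (fun k _ => by have := hc k; omega)
        _ = n * (N - 1) := by simp [Finset.sum_const, mul_comm]
    have h2 : n * (N - 1) ≤ (m + n) * N := by
      calc n * (N-1) ≤ n * N := Nat.mul_le_mul_left _ (by omega)
        _ ≤ (m + n) * N := Nat.mul_le_mul_right _ (by omega)
    omega
  obtain ⟨j, hj⟩ := hj
  obtain ⟨k, hk⟩ := hk
  set a : (Fin m ⊕ Fin n) →₀ ℕ :=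
    Finsupp.single (Sum.inl j) N + Finsupp.single (Sum.inr k) N with hadef
  have ha : a ≤ s := by
    rw [Finsupp.le_def]
    intro x
    rcases x with x | x <;>
      · simp only [hadef, Finsupp.add_apply, Finsupp.single_apply]
        split_ifs <;> simp_all <;> omega
  set s' := s - a with hs'def
  have hs'a : s' + a = s := tsub_add_cancel_of_le ha
  have hXpow : (X (Sum.inl j) * X (Sum.inr k) : MvPolynomial (Fin m ⊕ Fin n) ℂ) ^ N
      = monomial a 1 := by
    rw [X, X, monomial_mul, monomial_pow]
    congr 1
    · rw [hadef, smul_add, Finsupp.smul_single, Finsupp.smul_single]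
      simp
    · simp
  have hs'w : Finsupp.weight (wtf m n) s' = ((d + 1 - N : ℕ), (d + 1 - N : ℕ)) := by
    have haw : Finsupp.weight (wtf m n) a = (N, N) := by
      rw [weight_wtf_apply]
      apply Prod.ext <;> simp [hadef, Finsupp.single_apply]
    have := congrArg (Finsupp.weight (wtf m n)) hs'a
    rw [map_add, haw, hsw] at this
    have h1 := congrArg Prod.fst this
    have h2 := congrArg Prod.snd this
    simp only [Prod.fst_add, Prod.snd_add] at h1 h2
    apply Prod.ext <;> simp <;> omega
  -- the monomial decomposes
  have hmono : (monomial s (coeff s f) : MvPolynomial (Fin m ⊕ Fin n) ℂ)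
      = ∑ i, lam i * (cc (j, k) i * monomial s' (coeff s f)) := by
    have : (monomial s (coeff s f) : MvPolynomial (Fin m ⊕ Fin n) ℂ)
        = (X (Sum.inl j) * X (Sum.inr k)) ^ N * monomial s' (coeff s f) := by
      rw [hXpow, monomial_mul, one_mul, add_comm a s', hs'a]
    rw [this, ← hcc (j, k), Finset.sum_mul]
    exact Finset.sum_congr rfl fun i _ => by ring
  have hfinal : (monomial s (coeff s f) : MvPolynomial (Fin m ⊕ Fin n) ℂ)
      = ∑ i, lam i * weightedHomogeneousComponent (wtf m n) ((d:ℕ), (d:ℕ))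
          (cc (j, k) i * monomial s' (coeff s f)) := by
    have hwh : IsWeightedHomogeneous (wtf m n) (monomial s (coeff s f)) (d+1, d+1) :=
      isWeightedHomogeneous_monomial _ _ _ hsw
    have h11 : ((d+1 : ℕ), (d+1 : ℕ)) = ((1,1) : ℕ × ℕ) + ((d:ℕ), (d:ℕ)) := by
      rw [Prod.mk_add_mk]
      simp [add_comm]
    calc (monomial s (coeff s f) : MvPolynomial (Fin m ⊕ Fin n) ℂ)
        = weightedHomogeneousComponent (wtf m n) (d+1, d+1) (monomial s (coeff s f)) :=
          (hwh.weightedHomogeneousComponent_same).symm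
      _ = weightedHomogeneousComponent (wtf m n) (d+1, d+1)
            (∑ i, lam i * (cc (j, k) i * monomial s' (coeff s f))) := by rw [← hmono]
      _ = ∑ i, weightedHomogeneousComponent (wtf m n) (d+1, d+1)
            (lam i * (cc (j, k) i * monomial s' (coeff s f))) := map_sum _ _ _
      _ = ∑ i, lam i * weightedHomogeneousComponent (wtf m n) ((d:ℕ), (d:ℕ))
            (cc (j, k) i * monomial s' (coeff s f)) := by
          refine Finset.sum_congr rfl fun i _ => ?_
          rw [h11, wh_component_mul (hlam i)]
  rw [hfinal]
  apply Submodule.sum_mem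
  intro i _
  apply Submodule.mem_iSup_of_mem i
  refine ⟨_, weightedHomogeneousComponent_mem _ _ _, rfl⟩

theorem counting_false {m' n' r'' N : ℕ} (hN : 0 < N) (hrle : r'' + 1 ≤ m' + n')
    (lam : Fin (r'' + 1) → MvPolynomial (Fin (m' + 1) ⊕ Fin (n' + 1)) ℂ)
    (hlam : ∀ i, IsWeightedHomogeneous (wtf (m' + 1) (n' + 1)) (lam i) (1, 1))
    (cc : Fin (m' + 1) × Fin (n' + 1) → Fin (r'' + 1) →
      MvPolynomial (Fin (m' + 1) ⊕ Fin (n' + 1)) ℂ)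
    (hcc : ∀ q, ∑ i, cc q i * lam i =
      (X (.inl q.1) * X (.inr q.2) : MvPolynomial (Fin (m' + 1) ⊕ Fin (n' + 1)) ℂ) ^ N) :
    False := by
  classical
  have hmdef : True := trivial
  set Dd := ((m' + 1) + (n' + 1)) * N with hDd
  set CD : Finset ((Fin (m' + 1) ⊕ Fin (n' + 1)) →₀ ℕ) := expFinset (m' + 1) (n' + 1) Dd with hCD
  set csize := CD.card with hcsize
  set Bk : ℕ → Finset (MvPolynomial (Fin (m' + 1) ⊕ Fin (n' + 1)) ℂ) := fun k =>
    ((antFinset (r'' + 1) k) ×ˢ CD).image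
      (fun p => (∏ i, lam i ^ p.1 i) * monomial p.2 (1 : ℂ)) with hBk
  set Wk : ℕ → Submodule ℂ (MvPolynomial (Fin (m' + 1) ⊕ Fin (n' + 1)) ℂ) := fun k =>
    Submodule.span ℂ ((Bk k : Set (MvPolynomial (Fin (m' + 1) ⊕ Fin (n' + 1)) ℂ))) with hWk
  -- Claim 2 : T (Dd + k) ≤ Wk k
  have claim2 : ∀ k, weightedHomogeneousSubmodule ℂ (wtf (m' + 1) (n' + 1)) ((Dd + k : ℕ), (Dd + k : ℕ))
      ≤ Wk k := by
    intro k
    induction k with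
    | zero =>
      intro f hf
      have hf' : IsWeightedHomogeneous (wtf (m' + 1) (n' + 1)) f (Dd, Dd) := by simpa using hf
      nth_rewrite 1 [as_sum f]
      apply Submodule.sum_mem
      intro s hs
      have hsCD : s ∈ CD := (mem_expFinset s).2 (hf' (mem_support_iff.1 hs))
      have : (monomial s (coeff s f) : MvPolynomial (Fin (m' + 1) ⊕ Fin (n' + 1)) ℂ) = coeff s f • monomial s 1 := by
        rw [smul_monomial, smul_eq_mul, mul_one]
      rw [this]
      apply Submodule.smul_mem
      apply Submodule.subset_span
      refine Finset.mem_image.2 ⟨(fun _ => 0, s), Finset.mem_product.2 ⟨?_, hsCD⟩, ?_⟩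
      · rw [mem_antFinset]; simp
      · simp
    | succ k ih =>
      have hstep := claim_step (show 0 < m' + 1 by omega) (show 0 < n' + 1 by omega) hN lam hlam cc hcc
        (Dd + k) (by omega)
      have h1 : weightedHomogeneousSubmodule ℂ (wtf (m' + 1) (n' + 1))
          ((Dd + (k+1) : ℕ), (Dd + (k+1) : ℕ)) =
          weightedHomogeneousSubmodule ℂ (wtf (m' + 1) (n' + 1)) ((Dd + k + 1 : ℕ), (Dd + k + 1 : ℕ)) := by
        rfl
      rw [h1]
      refine le_trans hstep (iSup_le fun i => ?_)
      refine le_trans (Submodule.map_mono ih) ?_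
      rw [hWk]
      rw [Submodule.map_span]
      apply Submodule.span_le.2
      rintro _ ⟨b, hb, rfl⟩
      rw [Finset.mem_coe, hBk] at hb
      obtain ⟨⟨α, s⟩, hmem, rfl⟩ := Finset.mem_image.1 hb
      obtain ⟨hα, hsCD⟩ := Finset.mem_product.1 hmem
      rw [mem_antFinset] at hα
      apply Submodule.subset_span
      refine Finset.mem_image.2 ⟨(fun t => α t + if t = i then 1 else 0, s), ?_, ?_⟩
      · refine Finset.mem_product.2 ⟨?_, hsCD⟩
        rw [mem_antFinset]
        rw [Finset.sum_add_distrib, hα, Finset.sum_ite_eq' Finset.univ i (fun _ => 1)]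
        simp
      · simp only [LinearMap.mulLeft_apply]
        have hprod : (∏ t, lam t ^ (α t + if t = i then 1 else 0)) =
            lam i * ∏ t, lam t ^ α t := by
          rw [show (∏ t, lam t ^ (α t + if t = i then 1 else 0)) =
            ∏ t, (lam t ^ α t * if t = i then lam t else 1) from
            Finset.prod_congr rfl fun t _ => by rw [pow_add, pow_ite, pow_one, pow_zero]]
          rw [Finset.prod_mul_distrib, Finset.prod_ite_eq' Finset.univ i lam]
          simp [mul_comm]
        rw [hprod]
        ring
  -- parameters
  set q := ((m' + 1) + (n' + 1)) ^ (r'' + 1) * (csize + 1) + N with hq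
  set kk := (q - N) * ((m' + 1) + (n' + 1)) with hkk
  have hdq : Dd + kk = ((m' + 1) + (n' + 1)) * q := by
    rw [hDd, hkk, mul_comm (q - N), ← Nat.mul_add]
    congr 1
    omega
  set d := ((m' + 1) + (n' + 1)) * q with hd
  -- the independent family of monomials
  have hsum_le1 : ∀ (f : Fin m' → Fin (q+1)), ∑ j, (f j : ℕ) ≤ d := by
    intro f
    calc ∑ j, (f j : ℕ) ≤ ∑ _j : Fin m', q :=
          Finset.sum_le_sum fun j _ => Fin.is_le _
      _ = m' * q := by simp [mul_comm]
      _ ≤ ((m' + 1) + (n' + 1)) * q := Nat.mul_le_mul_right _ (by omega)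
  have hsum_le2 : ∀ (f : Fin n' → Fin (q+1)), ∑ j, (f j : ℕ) ≤ d := by
    intro f
    calc ∑ j, (f j : ℕ) ≤ ∑ _j : Fin n', q :=
          Finset.sum_le_sum fun j _ => Fin.is_le _
      _ = n' * q := by simp [mul_comm]
      _ ≤ ((m' + 1) + (n' + 1)) * q := Nat.mul_le_mul_right _ (by omega)
  set sfun : ((Fin m' → Fin (q + 1)) × (Fin n' → Fin (q + 1))) → ((Fin (m' + 1) ⊕ Fin (n' + 1)) →₀ ℕ) := fun p =>
    Finsupp.equivFunOnFinite.symm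
      (Sum.elim (Fin.snoc (fun j => (p.1 j : ℕ)) (d - ∑ j, (p.1 j : ℕ)))
        (Fin.snoc (fun k' => (p.2 k' : ℕ)) (d - ∑ k', (p.2 k' : ℕ)))) with hsfun
  have hsfun_apply : ∀ p (x : (Fin (m' + 1) ⊕ Fin (n' + 1))), sfun p x =
      (Sum.elim (Fin.snoc (fun j => ((p.1 j : ℕ))) (d - ∑ j, (p.1 j : ℕ)))
        (Fin.snoc (fun k' => ((p.2 k' : ℕ))) (d - ∑ k', (p.2 k' : ℕ))) : (Fin (m' + 1) ⊕ Fin (n' + 1)) → ℕ) x := by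
    intro p x
    rw [hsfun]
    simp
  have hsfun_w : ∀ p, Finsupp.weight (wtf (m' + 1) (n' + 1)) (sfun p) = ((d : ℕ), (d : ℕ)) := by
    intro p
    rw [weight_wtf_apply]
    have h1 : ∑ j, (sfun p) (Sum.inl j) = d := by
      have : ∀ j : Fin (m' + 1), (sfun p) (Sum.inl j) =
          (Fin.snoc (fun j => ((p.1 j : ℕ))) (d - ∑ j, (p.1 j : ℕ)) : Fin (m' + 1) → ℕ) j := by
        intro j; rw [hsfun_apply]; simp
      rw [Finset.sum_congr rfl fun j _ => this j]
      rw [Fin.sum_univ_castSucc]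
      simp only [Fin.snoc_castSucc, Fin.snoc_last]
      have := hsum_le1 p.1
      omega
    have h2 : ∑ k', (sfun p) (Sum.inr k') = d := by
      have : ∀ k' : Fin (n' + 1), (sfun p) (Sum.inr k') =
          (Fin.snoc (fun k' => ((p.2 k' : ℕ))) (d - ∑ k', (p.2 k' : ℕ)) : Fin (n' + 1) → ℕ) k' := by
        intro k'; rw [hsfun_apply]; simp
      rw [Finset.sum_congr rfl fun k' _ => this k']
      rw [Fin.sum_univ_castSucc]
      simp only [Fin.snoc_castSucc, Fin.snoc_last]
      have := hsum_le2 p.2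
      omega
    rw [h1, h2]
  have hsfun_inj : Function.Injective sfun := by
    intro p p' hpp
    have happ : ∀ x : (Fin (m' + 1) ⊕ Fin (n' + 1)), sfun p x = sfun p' x := fun x => by rw [hpp]
    have h1 : ∀ j : Fin m', p.1 j = p'.1 j := by
      intro j
      have := happ (Sum.inl (Fin.castSucc j))
      rw [hsfun_apply, hsfun_apply] at this
      simp only [Sum.elim_inl, Fin.snoc_castSucc] at this
      exact Fin.val_injective this
    have h2 : ∀ k' : Fin n', p.2 k' = p'.2 k' := by
      intro k'
      have := happ (Sum.inr (Fin.castSucc k'))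
      rw [hsfun_apply, hsfun_apply] at this
      simp only [Sum.elim_inr, Fin.snoc_castSucc] at this
      exact Fin.val_injective this
    exact Prod.ext (funext h1) (funext h2)
  -- linear independence
  have hmemW : ∀ p : ((Fin m' → Fin (q + 1)) × (Fin n' → Fin (q + 1))), (monomial (sfun p) 1 : MvPolynomial (Fin (m' + 1) ⊕ Fin (n' + 1)) ℂ) ∈ Wk kk := by
    intro p
    apply claim2 kk
    rw [mem_weightedHomogeneousSubmodule]
    apply isWeightedHomogeneous_monomial
    rw [hsfun_w p, hdq]
  have hli : LinearIndependent ℂ (fun p : ((Fin m' → Fin (q + 1)) × (Fin n' → Fin (q + 1))) => (monomial (sfun p) 1 : MvPolynomial (Fin (m' + 1) ⊕ Fin (n' + 1)) ℂ)) := by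
    have hb : ∀ p : ((Fin m' → Fin (q + 1)) × (Fin n' → Fin (q + 1))), (monomial (sfun p) 1 : MvPolynomial (Fin (m' + 1) ⊕ Fin (n' + 1)) ℂ) =
        (basisMonomials (Fin (m' + 1) ⊕ Fin (n' + 1)) ℂ) (sfun p) := by
      intro p
      rw [coe_basisMonomials]
    rw [show (fun p : ((Fin m' → Fin (q + 1)) × (Fin n' → Fin (q + 1))) => (monomial (sfun p) 1 : MvPolynomial (Fin (m' + 1) ⊕ Fin (n' + 1)) ℂ)) =
      (⇑(basisMonomials (Fin (m' + 1) ⊕ Fin (n' + 1)) ℂ) ∘ sfun) from funext fun p => by rw [hb p]; rfl]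
    exact (basisMonomials (Fin (m' + 1) ⊕ Fin (n' + 1)) ℂ).linearIndependent.comp sfun hsfun_inj
  haveI : FiniteDimensional ℂ (Wk kk) := by
    rw [hWk]
    exact FiniteDimensional.span_finset ℂ (Bk kk)
  have hcard : Fintype.card ((Fin m' → Fin (q + 1)) × (Fin n' → Fin (q + 1))) ≤ Module.finrank ℂ (Wk kk) := by
    have hli' : LinearIndependent ℂ (fun p : ((Fin m' → Fin (q + 1)) × (Fin n' → Fin (q + 1))) =>
        (⟨monomial (sfun p) 1, hmemW p⟩ : Wk kk)) := by
      apply LinearIndependent.of_comp (Wk kk).subtype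
      exact hli
    exact hli'.fintype_card_le_finrank
  have hcardI : Fintype.card ((Fin m' → Fin (q + 1)) × (Fin n' → Fin (q + 1))) = (q + 1) ^ (m' + n') := by
    rw [Fintype.card_prod, Fintype.card_fun, Fintype.card_fun]
    simp [pow_add]
  have hfinW : Module.finrank ℂ (Wk kk) ≤ (kk + 1) ^ r'' * csize := by
    calc Module.finrank ℂ (Wk kk) ≤ (Bk kk).card := finrank_span_finset_le_card (Bk kk)
      _ ≤ ((antFinset (r'' + 1) kk) ×ˢ CD).card := Finset.card_image_le
      _ = (antFinset (r'' + 1) kk).card * csize := by rw [Finset.card_product, hcsize]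
      _ ≤ (kk + 1) ^ r'' * csize := Nat.mul_le_mul_right _ card_antFinset_le
  -- final arithmetic contradiction
  have hmain : (q + 1) ^ (m' + n') ≤ (kk + 1) ^ r'' * csize := by
    rw [← hcardI]
    exact le_trans hcard hfinW
  have hkk1 : kk + 1 ≤ (q + 1) * ((m' + 1) + (n' + 1)) := by
    have : (q - N) * ((m' + 1) + (n' + 1)) ≤ q * ((m' + 1) + (n' + 1)) := Nat.mul_le_mul_right _ (by omega)
    have hmn : 0 < (m' + 1) + (n' + 1) := by omega
    calc kk + 1 = (q - N) * ((m' + 1) + (n' + 1)) + 1 := rfl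
      _ ≤ q * ((m' + 1) + (n' + 1)) + 1 := by omega
      _ ≤ q * ((m' + 1) + (n' + 1)) + ((m' + 1) + (n' + 1)) := by omega
      _ = (q + 1) * ((m' + 1) + (n' + 1)) := by ring
  have hstep2 : (q + 1) ^ (m' + n') ≤ (q + 1) ^ r'' * (((m' + 1) + (n' + 1)) ^ r'' * csize) := by
    calc (q + 1) ^ (m' + n') ≤ (kk + 1) ^ r'' * csize := hmain
      _ ≤ ((q + 1) * ((m' + 1) + (n' + 1))) ^ r'' * csize :=
          Nat.mul_le_mul_right _ (Nat.pow_le_pow_left hkk1 _)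
      _ = (q + 1) ^ r'' * (((m' + 1) + (n' + 1)) ^ r'' * csize) := by rw [mul_pow]; ring
  have hsplit : (q + 1) ^ (m' + n') = (q + 1) ^ r'' * (q + 1) ^ (m' + n' - r'') := by
    rw [← pow_add]
    congr 1
    omega
  have hcancel : (q + 1) ^ (m' + n' - r'') ≤ ((m' + 1) + (n' + 1)) ^ r'' * csize := by
    have hpos : 0 < (q + 1) ^ r'' := Nat.pow_pos (by omega)
    rw [hsplit] at hstep2
    exact Nat.le_of_mul_le_mul_left hstep2 hpos
  have hqle : q + 1 ≤ (q + 1) ^ (m' + n' - r'') := by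
    have h1 : 1 ≤ m' + n' - r'' := by omega
    calc q + 1 = (q + 1) ^ 1 := (pow_one _).symm
      _ ≤ (q + 1) ^ (m' + n' - r'') := Nat.pow_le_pow_right (by omega) h1
  have hqge : ((m' + 1) + (n' + 1)) ^ r'' * csize + 1 ≤ q := by
    have h1 : ((m' + 1) + (n' + 1)) ^ (r'' + 1) = ((m' + 1) + (n' + 1)) ^ r'' * ((m' + 1) + (n' + 1)) := by rw [pow_succ]
    have h2 : ((m' + 1) + (n' + 1)) ^ r'' * ((m' + 1) + (n' + 1)) ≥ ((m' + 1) + (n' + 1)) ^ r'' * 1 :=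
      Nat.mul_le_mul_left _ (by omega)
    have h3 : 0 < ((m' + 1) + (n' + 1)) ^ r'' := Nat.pow_pos (by omega)
    calc ((m' + 1) + (n' + 1)) ^ r'' * csize + 1 ≤ ((m' + 1) + (n' + 1)) ^ r'' * csize + ((m' + 1) + (n' + 1)) ^ r'' := by omega
      _ = ((m' + 1) + (n' + 1)) ^ r'' * (csize + 1) := by ring
      _ ≤ ((m' + 1) + (n' + 1)) ^ (r'' + 1) * (csize + 1) := Nat.mul_le_mul_right _ (by
          rw [h1]; omega)
      _ ≤ q := by rw [hq]; omega
  omega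

theorem key_product_vector {m n r : ℕ} (hm : 0 < m) (hn : 0 < n)
    (hr : r ≤ m + n - 2) (w : Fin r → (Fin m × Fin n → ℂ)) :
    ∃ (u : Fin m → ℂ) (v : Fin n → ℂ), u ≠ 0 ∧ v ≠ 0 ∧
      ∀ i, ∑ j, ∑ k, w i (j, k) * u j * v k = 0 := by
  classical
  rcases r with - | r''
  · refine ⟨fun _ => 1, fun _ => 1, ?_, ?_, fun i => Fin.elim0 i⟩
    · intro h
      have := congrFun h ⟨0, hm⟩
      simpa using this
    · intro h
      have := congrFun h ⟨0, hn⟩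
      simpa using this
  obtain ⟨m', rfl⟩ : ∃ m', m = m' + 1 := ⟨m - 1, by omega⟩
  obtain ⟨n', rfl⟩ : ∃ n', n = n' + 1 := ⟨n - 1, by omega⟩
  have hrle : r'' + 1 ≤ m' + n' := by omega
  by_contra hcon
  push_neg at hcon
  set lam : Fin (r'' + 1) → MvPolynomial (Fin (m' + 1) ⊕ Fin (n' + 1)) ℂ :=
    fun i => ∑ j, ∑ k, C (w i (j, k)) * (X (.inl j) * X (.inr k)) with hlamdef
  set I : Ideal (MvPolynomial (Fin (m' + 1) ⊕ Fin (n' + 1)) ℂ) :=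
    Ideal.span (Set.range lam) with hI
  set XX : Fin (m' + 1) × Fin (n' + 1) → MvPolynomial (Fin (m' + 1) ⊕ Fin (n' + 1)) ℂ :=
    fun q => X (.inl q.1) * X (.inr q.2) with hXX
  have hzero : ∀ p ∈ zeroLocus ℂ I, ∀ q : Fin (m' + 1) × Fin (n' + 1), eval p (XX q) = 0 := by
    intro p hp q
    have hu : ∀ i, ∑ j, ∑ k, w i (j, k) * (p (Sum.inl j)) * (p (Sum.inr k)) = 0 := by
      intro i
      have : eval p (lam i) = 0 := by
        have h := (mem_zeroLocus_iff).1 hp _ (Ideal.subset_span ⟨i, rfl⟩)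
        exact h
      simpa [hlamdef, mul_assoc] using this
    have hinst := hcon (fun j => p (Sum.inl j)) (fun k => p (Sum.inr k))
    rcases Classical.em ((fun j => p (Sum.inl j)) = 0) with h1 | h1
    · simp [hXX, show p (Sum.inl q.1) = 0 from congrFun h1 q.1]
    · rcases Classical.em ((fun k => p (Sum.inr k)) = 0) with h2 | h2
      · simp [hXX, show p (Sum.inr q.2) = 0 from congrFun h2 q.2]
      · obtain ⟨i, hi⟩ := hinst h1 h2
        exact absurd (hu i) hi
  have hrad : ∀ q : Fin (m' + 1) × Fin (n' + 1), ∃ e : ℕ, XX q ^ e ∈ I := by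
    intro q
    have : XX q ∈ I.radical := by
      rw [← vanishingIdeal_zeroLocus_eq_radical (K := ℂ), mem_vanishingIdeal_iff]
      intro x hx
      exact hzero x hx q
    exact this
  -- uniform power N and coefficients
  choose e he using hrad
  set N := (∑ q, e q) + 1 with hN
  have hNpos : 0 < N := Nat.succ_pos _
  have hpowI : ∀ q, XX q ^ N ∈ I := by
    intro q
    have hle : e q ≤ ∑ q', e q' :=
      Finset.single_le_sum (f := e) (fun _ _ => Nat.zero_le _) (Finset.mem_univ q)
    have : XX q ^ N = XX q ^ (N - e q) * XX q ^ e q := by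
      rw [← pow_add]; congr 1; omega
    rw [this]
    exact Ideal.mul_mem_left _ _ (he q)
  have hcc : ∀ q, ∃ c : Fin (r'' + 1) → MvPolynomial (Fin (m' + 1) ⊕ Fin (n' + 1)) ℂ,
      ∑ i, c i * lam i = XX q ^ N := by
    intro q
    have hmem : XX q ^ N ∈ Submodule.span (MvPolynomial (Fin (m' + 1) ⊕ Fin (n' + 1)) ℂ)
        (Set.range lam) := hpowI q
    rw [Submodule.mem_span_range_iff_exists_fun] at hmem
    obtain ⟨c, hc⟩ := hmem
    exact ⟨c, by simpa [smul_eq_mul] using hc⟩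
  choose cc hccs using hcc
  -- homogeneity
  have hlam : ∀ i, IsWeightedHomogeneous (wtf (m' + 1) (n' + 1)) (lam i) (1, 1) := by
    intro i
    apply IsWeightedHomogeneous.sum
    intro j _
    apply IsWeightedHomogeneous.sum
    intro k _
    have hmono : (C (w i (j, k)) * (X (.inl j) * X (.inr k)) :
        MvPolynomial (Fin (m' + 1) ⊕ Fin (n' + 1)) ℂ)
        = monomial (Finsupp.single (Sum.inl j) 1 + Finsupp.single (Sum.inr k) 1) (w i (j, k)) := by
      rw [X, X, monomial_mul, C_mul_monomial]
      simp
    rw [hmono]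
    apply isWeightedHomogeneous_monomial
    rw [weight_wtf_apply]
    apply Prod.ext <;> simp [Finsupp.single_apply]
  exact counting_false hNpos hrle lam hlam cc (fun q => by rw [hccs q])



/-- any unit vector is the `i₀`-th row of some unitary matrix -/
theorem exists_unitary_row {m : ℕ} (i₀ : Fin m) (x : EuclideanSpace ℂ (Fin m))
    (hx : ‖x‖ = 1) :
    ∃ U ∈ Matrix.unitaryGroup (Fin m) ℂ, ∀ j, U i₀ j = x j := by
  classical
  have hortho : Orthonormal ℂ (({i₀} : Set (Fin m)).restrict (fun _ : Fin m => x)) := by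
    constructor
    · intro i; exact hx
    · intro i j hij
      exfalso
      exact hij (Subtype.ext (by
        have hi := i.2
        have hj := j.2
        simp only [Set.mem_singleton_iff] at hi hj
        rw [hi, hj]))
  obtain ⟨b, hb⟩ := Orthonormal.exists_orthonormalBasis_extension_of_card_eq
    (by simp [finrank_euclideanSpace]) hortho
  have hbi₀ : b i₀ = x := by
    have := hb i₀ (Set.mem_singleton i₀)
    simpa using this
  refine ⟨Matrix.of (fun i j => (b i) j), ?_, fun j => by rw [Matrix.of_apply, hbi₀]⟩
  rw [Matrix.mem_unitaryGroup_iff]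
  ext i i'
  rw [Matrix.mul_apply, Matrix.one_apply]
  have horth := b.orthonormal
  rw [orthonormal_iff_ite] at horth
  have hinner := horth i' i
  rw [PiLp.inner_apply] at hinner
  simp only [RCLike.inner_apply] at hinner
  calc ∑ j, Matrix.of (fun i j => (b i) j) i j * (star (Matrix.of (fun i j => (b i) j)) j i')
      = ∑ j, (starRingEnd ℂ) (b i' j) * (b i j) := by
        apply Finset.sum_congr rfl
        intro j _
        simp [Matrix.star_eq_conjTranspose, Matrix.conjTranspose_apply, mul_comm]
      _ = if i' = i then 1 else 0 := by
          rw [← hinner]; exact Finset.sum_congr rfl fun j _ => mul_comm _ _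
      _ = if i = i' then 1 else 0 := by
        by_cases h : i = i' <;> simp [h, eq_comm]

/-- For a bipartite state `η` on `ℂ^m ⊗ ℂ^n` of rank `r` with `1 ≤ r ≤ m + n - 2`, there
are local unitaries `U`, `V` such that the last diagonal entry (at index
`(m-1, n-1)`) of `(U ⊗ V) η (U ⊗ V)†` vanishes. -/
theorem exists_LU_last_diagonal_zero {m n r : ℕ} (hm : 0 < m) (hn : 0 < n)
    (η : Matrix (Fin m × Fin n) (Fin m × Fin n) ℂ)
    (hpsd : η.PosSemidef) (htr : η.trace = 1)
    (hrank : η.rank = r) (hr1 : 1 ≤ r) (hr2 : r ≤ m + n - 2) :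
    ∃ U ∈ Matrix.unitaryGroup (Fin m) ℂ, ∃ V ∈ Matrix.unitaryGroup (Fin n) ℂ,
      ((U ⊗ₖ V) * η * (U ⊗ₖ V)ᴴ)
        (⟨m - 1, by omega⟩, ⟨n - 1, by omega⟩) (⟨m - 1, by omega⟩, ⟨n - 1, by omega⟩) = 0 := by
  classical
  -- the row space of η
  set W : Submodule ℂ (Fin m × Fin n → ℂ) := LinearMap.range (Matrix.mulVecLin ηᵀ) with hW
  have hfr : Module.finrank ℂ W = r := by
    have h1 : (ηᵀ).rank = r := by rw [Matrix.rank_transpose, hrank]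
    exact h1
  have hWfd : FiniteDimensional ℂ W := inferInstance
  set b : Module.Basis (Fin r) ℂ W := Module.finBasisOfFinrankEq ℂ W hfr with hb
  set w : Fin r → (Fin m × Fin n → ℂ) := fun i => ((b i : Fin m × Fin n → ℂ)) with hw
  obtain ⟨u, v, hu, hv, huv⟩ := key_product_vector hm hn hr2 w
  set z : Fin m × Fin n → ℂ := fun t => u t.1 * v t.2 with hz
  -- z is in the kernel of η
  have hker : η.mulVec z = 0 := by
    set φ : (Fin m × Fin n → ℂ) →ₗ[ℂ] ℂ :=
      { toFun := fun x => ∑ t, x t * z t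
        map_add' := by intros; simp [add_mul, Finset.sum_add_distrib]
        map_smul' := by intros; simp [Finset.mul_sum, mul_assoc] } with hφ
    have hψ : φ.comp W.subtype = 0 := by
      apply b.ext
      intro i
      have : φ (w i) = 0 := by
        rw [hφ]
        simp only [LinearMap.coe_mk, AddHom.coe_mk]
        rw [Fintype.sum_prod_type]
        rw [← huv i]
        exact Finset.sum_congr rfl fun j _ => Finset.sum_congr rfl fun k _ => by
          rw [hz]; ring
      simpa using this
    funext t₀
    have hrow : (fun s => η t₀ s) ∈ W := by
      refine ⟨Pi.single t₀ 1, ?_⟩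
      funext s
      rw [Matrix.mulVecLin_apply]
      simp [Matrix.mulVec_single]
    have := congrArg (fun (f : W →ₗ[ℂ] ℂ) => f ⟨(fun s => η t₀ s), hrow⟩) hψ
    simp only [LinearMap.comp_apply, Submodule.coe_subtype, LinearMap.zero_apply] at this
    have hφval : φ (fun s => η t₀ s) = 0 := this
    rw [hφ] at hφval
    simp only [LinearMap.coe_mk, AddHom.coe_mk] at hφval
    show η.mulVec z t₀ = 0
    rw [Matrix.mulVec]
    exact hφval
  -- normalize u and v
  set u0 : EuclideanSpace ℂ (Fin m) := WithLp.toLp 2 u with hu0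
  set v0 : EuclideanSpace ℂ (Fin n) := WithLp.toLp 2 v with hv0
  have hu0ne : u0 ≠ 0 := by simpa [hu0] using hu
  have hv0ne : v0 ≠ 0 := by simpa [hv0] using hv
  set us : EuclideanSpace ℂ (Fin m) := WithLp.toLp 2 (fun j => star (((‖u0‖⁻¹ : ℝ) • u0) j)) with hus
  set vs : EuclideanSpace ℂ (Fin n) := WithLp.toLp 2 (fun k => star (((‖v0‖⁻¹ : ℝ) • v0) k)) with hvs
  have hus1 : ‖us‖ = 1 := by
    have h1 : ‖(‖u0‖⁻¹ : ℝ) • u0‖ = 1 := norm_smul_inv_norm hu0ne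
    rw [← h1]
    rw [EuclideanSpace.norm_eq, EuclideanSpace.norm_eq]
    congr 1
    apply Finset.sum_congr rfl
    intro j _
    rw [hus]
    simp
  have hvs1 : ‖vs‖ = 1 := by
    have h1 : ‖(‖v0‖⁻¹ : ℝ) • v0‖ = 1 := norm_smul_inv_norm hv0ne
    rw [← h1]
    rw [EuclideanSpace.norm_eq, EuclideanSpace.norm_eq]
    congr 1
    apply Finset.sum_congr rfl
    intro k _
    rw [hvs]
    simp
  obtain ⟨U, hUmem, hUrow⟩ := exists_unitary_row ⟨m - 1, by omega⟩ us hus1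
  obtain ⟨V, hVmem, hVrow⟩ := exists_unitary_row ⟨n - 1, by omega⟩ vs hvs1
  refine ⟨U, hUmem, V, hVmem, ?_⟩
  set p : Fin m × Fin n := (⟨m - 1, by omega⟩, ⟨n - 1, by omega⟩) with hp
  -- scaled z
  set c : ℂ := ((‖u0‖⁻¹ : ℝ) : ℂ) * ((‖v0‖⁻¹ : ℝ) : ℂ) with hc
  set z1 : Fin m × Fin n → ℂ := fun t => c * z t with hz1
  have hkerz1 : η.mulVec z1 = 0 := by
    have : z1 = c • z := by funext t; simp [hz1, smul_eq_mul]
    rw [this, Matrix.mulVec_smul, hker, smul_zero]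
  have hstarrow : ∀ t : Fin m × Fin n, star ((U ⊗ₖ V) p t) = z1 t := by
    intro t
    rw [Matrix.kroneckerMap_apply]
    have h1 : U p.1 t.1 = us t.1 := hUrow t.1
    have h2 : V p.2 t.2 = vs t.2 := hVrow t.2
    rw [h1, h2, hus, hvs]
    simp only [star_mul', star_star]
    rw [hz1, hc, hz]
    simp [PiLp.smul_apply, Complex.real_smul]
    ring
  calc ((U ⊗ₖ V) * η * (U ⊗ₖ V)ᴴ) p p
      = ∑ t, (∑ s, (U ⊗ₖ V) p s * η s t) * star ((U ⊗ₖ V) p t) := by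
        rw [Matrix.mul_apply]
        refine Finset.sum_congr rfl fun t _ => ?_
        rw [Matrix.mul_apply, Matrix.conjTranspose_apply]
    _ = ∑ t, ∑ s, (U ⊗ₖ V) p s * (η s t * z1 t) := by
        refine Finset.sum_congr rfl fun t _ => ?_
        rw [hstarrow t, Finset.sum_mul]
        exact Finset.sum_congr rfl fun s _ => by ring
    _ = ∑ s, ∑ t, (U ⊗ₖ V) p s * (η s t * z1 t) := Finset.sum_comm
    _ = ∑ s, (U ⊗ₖ V) p s * (η.mulVec z1 s) := by
        refine Finset.sum_congr rfl fun s _ => ?_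
        rw [← Finset.mul_sum]
        congr 1
    _ = 0 := by
        rw [hkerz1]
        simp
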